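/- Let λ be a nonzero integer, let f(X) = X²(X−λ), let R = ℤ[X]/(f), and let p be a prime dividing λ. Then for every real number σ > 1/2, the series Σ_{l≥0} a_R(p^l) p^{−lσ} converges. -/

import Mathlib

/-- `idealCount R k` is the number of ideals `I` of `R` such that `R ⧸ I` is finite
with exactly `k` elements. -/
noncomputable def idealCount (R : Type) [CommRing R] (k : ℕ) : ℕ :=
  Set.ncard {I : Ideal R | Nat.card (R ⧸ I) = k}

namespace LocalFactorAux

open Polynomial

variable (lam : ℤ)

noncomputable abbrev fpoly : Polynomial ℤ := X ^ 2 * (X - C lam)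

abbrev Rng := Polynomial ℤ ⧸ Ideal.span {fpoly lam}

noncomputable def emb (a b c : ℤ) : Rng lam :=
  Ideal.Quotient.mk _ (C c * X ^ 2 + C b * X + C a)

lemma fpoly_monic : (fpoly lam).Monic := (monic_X_pow 2).mul (monic_X_sub_C lam)

lemma fpoly_degree : (fpoly lam).degree = 3 := by
  rw [degree_mul, degree_X_pow, degree_X_sub_C]; rfl

lemma emb_eq_zero {a b c : ℤ} (h : emb lam a b c = 0) : a = 0 ∧ b = 0 ∧ c = 0 := by
  have hdvd : fpoly lam ∣ (C c * X ^ 2 + C b * X + C a) := by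
    rwa [emb, Ideal.Quotient.eq_zero_iff_mem, Ideal.mem_span_singleton] at h
  have h0 : (C c * X ^ 2 + C b * X + C a : Polynomial ℤ) = 0 := by
    refine Polynomial.eq_zero_of_dvd_of_degree_lt hdvd ?_
    refine lt_of_le_of_lt degree_quadratic_le ?_
    rw [fpoly_degree]; norm_num
  refine ⟨?_, ?_, ?_⟩
  · have := congrArg (fun q => Polynomial.coeff q 0) h0
    simp only [coeff_add, coeff_C_mul, coeff_X_pow, coeff_C, coeff_X, coeff_zero] at this
    simpa using this
  · have := congrArg (fun q => Polynomial.coeff q 1) h0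
    simp only [coeff_add, coeff_C_mul, coeff_X_pow, coeff_C, coeff_X, coeff_zero] at this
    simpa using this
  · have := congrArg (fun q => Polynomial.coeff q 2) h0
    simp only [coeff_add, coeff_C_mul, coeff_X_pow, coeff_C, coeff_X, coeff_zero] at this
    simpa using this

lemma emb_add (a b c a' b' c' : ℤ) :
    emb lam a b c + emb lam a' b' c' = emb lam (a + a') (b + b') (c + c') := by
  unfold emb
  rw [← map_add]
  congr 1
  simp only [C_add]
  ring

lemma emb_sub (a b c a' b' c' : ℤ) :
    emb lam a b c - emb lam a' b' c' = emb lam (a - a') (b - b') (c - c') := by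
  unfold emb
  rw [← map_sub]
  congr 1
  simp only [C_sub]
  ring

lemma C_mul_emb (s a b c : ℤ) :
    Ideal.Quotient.mk _ (C s) * emb lam a b c = emb lam (s * a) (s * b) (s * c) := by
  unfold emb
  rw [← map_mul]
  congr 1
  simp only [C_mul]
  ring

lemma X_mul_emb (a b c : ℤ) :
    Ideal.Quotient.mk _ (X : Polynomial ℤ) * emb lam a b c = emb lam 0 a (b + lam * c) := by
  unfold emb
  rw [← map_mul, Ideal.Quotient.mk_eq_mk_iff_sub_mem, Ideal.mem_span_singleton]
  refine ⟨C c, ?_⟩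
  simp only [C_add, C_mul, C_0, map_zero]
  ring

lemma poly_eq_of_degree_lt {q : Polynomial ℤ} (h : q.degree < 3) :
    q = C (q.coeff 2) * X ^ 2 + C (q.coeff 1) * X + C (q.coeff 0) := by
  ext n
  simp only [coeff_add, coeff_C_mul, coeff_X_pow, coeff_C, coeff_X]
  match n with
  | 0 => simp
  | 1 => simp
  | 2 => simp
  | (n + 3) =>
    have h1 : q.coeff (n + 3) = 0 := by
      apply Polynomial.coeff_eq_zero_of_degree_lt
      refine lt_of_lt_of_le h ?_
      exact_mod_cast Nat.le_add_left 3 n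
    rw [h1]
    have h2 : ¬ (n + 3 = 2) := by omega
    have h3 : ¬ (n + 3 = 1) := by omega
    have h4 : ¬ (n + 3 = 0) := by omega
    simp_all

lemma exists_emb (r : Rng lam) : ∃ a b c : ℤ, r = emb lam a b c := by
  obtain ⟨g, rfl⟩ := Ideal.Quotient.mk_surjective r
  refine ⟨(g %ₘ fpoly lam).coeff 0, (g %ₘ fpoly lam).coeff 1, (g %ₘ fpoly lam).coeff 2, ?_⟩
  have h1 : Ideal.Quotient.mk (Ideal.span {fpoly lam}) g
      = Ideal.Quotient.mk _ (g %ₘ fpoly lam) := by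
    rw [Ideal.Quotient.mk_eq_mk_iff_sub_mem, Ideal.mem_span_singleton]
    refine ⟨g /ₘ fpoly lam, ?_⟩
    have := Polynomial.modByMonic_add_div g (fpoly lam)
    linear_combination -this
  rw [h1, emb]
  congr 1
  exact poly_eq_of_degree_lt ((g.degree_modByMonic_lt (fpoly_monic lam)).trans_eq
    (fpoly_degree lam))

/-- The ideal of `ℤ` of possible `x²`-coordinates of elements of `I` with zero
first coordinates. -/
def S2 (I : Ideal (Rng lam)) : Ideal ℤ where
  carrier := {c | emb lam 0 0 c ∈ I}
  zero_mem' := by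
    have : emb lam 0 0 0 = 0 := by simp [emb]
    simp [Set.mem_setOf_eq, this]
  add_mem' := by
    intro x y hx hy
    have := I.add_mem hx hy
    rwa [emb_add, add_zero] at this
  smul_mem' := by
    intro s x hx
    have := I.mul_mem_left (Ideal.Quotient.mk _ (C s)) hx
    rw [C_mul_emb] at this
    simpa using this

def S1 (I : Ideal (Rng lam)) : Ideal ℤ where
  carrier := {b | ∃ c, emb lam 0 b c ∈ I}
  zero_mem' := ⟨0, by
    have : emb lam 0 0 0 = 0 := by simp [emb]
    simp [this]⟩
  add_mem' := by
    rintro x y ⟨cx, hx⟩ ⟨cy, hy⟩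
    refine ⟨cx + cy, ?_⟩
    have := I.add_mem hx hy
    rwa [emb_add, add_zero] at this
  smul_mem' := by
    rintro s x ⟨cx, hx⟩
    refine ⟨s * cx, ?_⟩
    have := I.mul_mem_left (Ideal.Quotient.mk _ (C s)) hx
    rw [C_mul_emb] at this
    simpa using this

def S0 (I : Ideal (Rng lam)) : Ideal ℤ where
  carrier := {a | ∃ b c, emb lam a b c ∈ I}
  zero_mem' := ⟨0, 0, by
    have : emb lam 0 0 0 = 0 := by simp [emb]
    simp [this]⟩
  add_mem' := by
    rintro x y ⟨bx, cx, hx⟩ ⟨by', cy, hy⟩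
    refine ⟨bx + by', cx + cy, ?_⟩
    have := I.add_mem hx hy
    rwa [emb_add] at this
  smul_mem' := by
    rintro s x ⟨bx, cx, hx⟩
    refine ⟨s * bx, s * cx, ?_⟩
    have := I.mul_mem_left (Ideal.Quotient.mk _ (C s)) hx
    rwa [C_mul_emb] at this

lemma mem_S2 {I : Ideal (Rng lam)} {c : ℤ} : c ∈ S2 lam I ↔ emb lam 0 0 c ∈ I := Iff.rfl
lemma mem_S1 {I : Ideal (Rng lam)} {b : ℤ} : b ∈ S1 lam I ↔ ∃ c, emb lam 0 b c ∈ I := Iff.rfl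
lemma mem_S0 {I : Ideal (Rng lam)} {a : ℤ} : a ∈ S0 lam I ↔ ∃ b c, emb lam a b c ∈ I := Iff.rfl

variable (p : ℕ)

/-- Hermite-like normal form data for an ideal of finite `p`-power index. -/
structure Spec (I : Ideal (Rng lam)) (a0 a1 a2 : ℕ) (α β γ : ℤ) : Prop where
  hS0 : S0 lam I = Ideal.span {(p : ℤ) ^ a0}
  hS1 : S1 lam I = Ideal.span {(p : ℤ) ^ a1}
  hS2 : S2 lam I = Ideal.span {(p : ℤ) ^ a2}
  hα0 : 0 ≤ α
  hα1 : α < (p : ℤ) ^ a1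
  hβ0 : 0 ≤ β
  hβ1 : β < (p : ℤ) ^ a2
  hγ0 : 0 ≤ γ
  hγ1 : γ < (p : ℤ) ^ a2
  hv0 : emb lam ((p : ℤ) ^ a0) α β ∈ I
  hv1 : emb lam 0 ((p : ℤ) ^ a1) γ ∈ I

namespace Spec

variable {lam p} {I I' : Ideal (Rng lam)} {a0 a1 a2 : ℕ} {α β γ α' β' γ' : ℤ}

lemma dvd2 (h : Spec lam p I a0 a1 a2 α β γ) {c : ℤ} (hc : emb lam 0 0 c ∈ I) :
    (p : ℤ) ^ a2 ∣ c := by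
  have : c ∈ S2 lam I := hc
  rwa [h.hS2, Ideal.mem_span_singleton] at this

lemma a1_le_a0 (hp : 1 < p) (h : Spec lam p I a0 a1 a2 α β γ) : a1 ≤ a0 := by
  have hx : emb lam 0 ((p : ℤ) ^ a0) (α + lam * β) ∈ I := by
    have := I.mul_mem_left (Ideal.Quotient.mk _ X) h.hv0
    rwa [X_mul_emb] at this
  have h1 : ((p : ℤ) ^ a0) ∈ S1 lam I := ⟨_, hx⟩
  rw [h.hS1, Ideal.mem_span_singleton] at h1
  have h2 : p ^ a1 ∣ p ^ a0 := by
    have := Int.natAbs_dvd_natAbs.mpr h1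
    simpa [Int.natAbs_pow] using this
  exact (Nat.pow_dvd_pow_iff_le_right hp).mp h2

lemma cong_γ (h : Spec lam p I a0 a1 a2 α β γ) :
    (p : ℤ) ^ a2 ∣ (p : ℤ) ^ a1 + lam * γ := by
  apply h.dvd2
  have := I.mul_mem_left (Ideal.Quotient.mk _ X) h.hv1
  rwa [X_mul_emb] at this

lemma cong_αβ (hp : 1 < p) (h : Spec lam p I a0 a1 a2 α β γ) :
    (p : ℤ) ^ a2 ∣ α + lam * β - (p : ℤ) ^ (a0 - a1) * γ := by
  have hx : emb lam 0 ((p : ℤ) ^ a0) (α + lam * β) ∈ I := by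
    have := I.mul_mem_left (Ideal.Quotient.mk _ X) h.hv0
    rwa [X_mul_emb] at this
  have hy := I.sub_mem hx (I.mul_mem_left (Ideal.Quotient.mk _ (C ((p : ℤ) ^ (a0 - a1)))) h.hv1)
  rw [C_mul_emb, emb_sub] at hy
  have hpow : (p : ℤ) ^ (a0 - a1) * (p : ℤ) ^ a1 = (p : ℤ) ^ a0 := by
    rw [← pow_add, Nat.sub_add_cancel (h.a1_le_a0 hp)]
  apply h.dvd2
  have e0 : (0 : ℤ) - (p : ℤ) ^ (a0 - a1) * 0 = 0 := by ring
  have e1 : (p : ℤ) ^ a0 - (p : ℤ) ^ (a0 - a1) * (p : ℤ) ^ a1 = 0 := by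
    rw [hpow]; ring
  rwa [e0, e1] at hy

end Spec

lemma spec_le {I I' : Ideal (Rng lam)} {a0 a1 a2 : ℕ} {α β γ : ℤ}
    (h : Spec lam p I a0 a1 a2 α β γ) (h' : Spec lam p I' a0 a1 a2 α β γ) : I ≤ I' := by
  intro v hv
  obtain ⟨a, b, c, rfl⟩ := exists_emb lam v
  have ha : (p : ℤ) ^ a0 ∣ a := by
    have : a ∈ S0 lam I := ⟨b, c, hv⟩
    rwa [h.hS0, Ideal.mem_span_singleton] at this
  obtain ⟨s, hs⟩ := ha
  have u1 : emb lam 0 (b - s * α) (c - s * β) ∈ I := by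
    have hh := I.sub_mem hv (I.mul_mem_left (Ideal.Quotient.mk _ (C s)) h.hv0)
    rw [C_mul_emb, emb_sub] at hh
    have e0 : a - s * (p : ℤ) ^ a0 = 0 := by rw [hs]; ring
    rwa [e0] at hh
  have hb : (p : ℤ) ^ a1 ∣ b - s * α := by
    have : b - s * α ∈ S1 lam I := ⟨_, u1⟩
    rwa [h.hS1, Ideal.mem_span_singleton] at this
  obtain ⟨t, ht⟩ := hb
  have u2 : emb lam 0 0 (c - s * β - t * γ) ∈ I := by
    have hh := I.sub_mem u1 (I.mul_mem_left (Ideal.Quotient.mk _ (C t)) h.hv1)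
    rw [C_mul_emb, emb_sub] at hh
    have e0 : (0 : ℤ) - t * 0 = 0 := by ring
    have e1 : b - s * α - t * (p : ℤ) ^ a1 = 0 := by rw [ht]; ring
    rwa [e0, e1] at hh
  have hc : (p : ℤ) ^ a2 ∣ c - s * β - t * γ := h.dvd2 u2
  -- now reassemble inside I'
  have w2 : emb lam 0 0 (c - s * β - t * γ) ∈ I' := by
    have : c - s * β - t * γ ∈ S2 lam I' := by
      rw [h'.hS2, Ideal.mem_span_singleton]; exact hc
    exact this
  have w0 := I'.mul_mem_left (Ideal.Quotient.mk _ (C s)) h'.hv0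
  have w1 := I'.mul_mem_left (Ideal.Quotient.mk _ (C t)) h'.hv1
  rw [C_mul_emb] at w0 w1
  have hsum := I'.add_mem (I'.add_mem w0 w1) w2
  rw [emb_add, emb_add] at hsum
  have e0 : s * (p : ℤ) ^ a0 + t * 0 + 0 = a := by rw [hs]; ring
  have e1 : s * α + t * (p : ℤ) ^ a1 + 0 = b := by
    have : b = s * α + ((p:ℤ) ^ a1 * t) := by linarith [ht]
    rw [this]; ring
  have e2 : s * β + t * γ + (c - s * β - t * γ) = c := by ring
  rwa [e0, e1, e2] at hsum

lemma spec_unique {I I' : Ideal (Rng lam)} {a0 a1 a2 : ℕ} {α β γ : ℤ}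
    (h : Spec lam p I a0 a1 a2 α β γ) (h' : Spec lam p I' a0 a1 a2 α β γ) : I = I' :=
  le_antisymm (spec_le lam p h h') (spec_le lam p h' h)

end LocalFactorAux

namespace LocalFactorAux

open Polynomial

variable (lam : ℤ) (p : ℕ)

lemma exists_span_pow (hp : p.Prime) {l : ℕ} (S : Ideal ℤ) (hS : (p : ℤ) ^ l ∈ S) :
    ∃ a ≤ l, S = Ideal.span {(p : ℤ) ^ a} := by
  obtain ⟨g, hg⟩ := (IsPrincipalIdealRing.principal S).principal
  rw [Ideal.submodule_span_eq] at hg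
  have gdvd : g ∣ (p : ℤ) ^ l := by
    rw [hg, Ideal.mem_span_singleton] at hS; exact hS
  have gna : g.natAbs ∣ p ^ l := by
    have := Int.natAbs_dvd_natAbs.mpr gdvd
    simpa [Int.natAbs_pow] using this
  obtain ⟨j, hjl, hj⟩ := (Nat.dvd_prime_pow hp).mp gna
  refine ⟨j, hjl, ?_⟩
  rw [hg, Ideal.span_singleton_eq_span_singleton]
  apply Int.natAbs_eq_iff_associated.mp
  simp [Int.natAbs_pow, hj]

lemma pow_mem_of_card {I : Ideal (Rng lam)} {l : ℕ}
    (hcard : Nat.card (Rng lam ⧸ I) = p ^ l) :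
    emb lam ((p : ℤ) ^ l) 0 0 ∈ I ∧ emb lam 0 ((p : ℤ) ^ l) 0 ∈ I ∧
      emb lam 0 0 ((p : ℤ) ^ l) ∈ I := by
  have h1 : ((p ^ l : ℕ) : Rng lam ⧸ I) = 0 := by
    have : ((p ^ l : ℕ) : Rng lam ⧸ I) = (p ^ l : ℕ) • (1 : Rng lam ⧸ I) := by
      exact (nsmul_one _).symm
    rw [this, ← hcard]
    exact card_nsmul_eq_zero'
  have h2 : Ideal.Quotient.mk I ((p ^ l : ℕ) : Rng lam) = 0 := by
    rw [map_natCast]; exact h1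
  have h3 : ((p ^ l : ℕ) : Rng lam) ∈ I := Ideal.Quotient.eq_zero_iff_mem.mp h2
  have h4 : emb lam ((p : ℤ) ^ l) 0 0 = ((p ^ l : ℕ) : Rng lam) := by
    have hC : (C ((p : ℤ) ^ l) : Polynomial ℤ) = ((p ^ l : ℕ) : Polynomial ℤ) := by
      push_cast; simp
    simp [emb, hC]
  have hm0 : emb lam ((p : ℤ) ^ l) 0 0 ∈ I := by rwa [h4]
  have hm1 : emb lam 0 ((p : ℤ) ^ l) 0 ∈ I := by
    have := I.mul_mem_left (Ideal.Quotient.mk _ X) hm0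
    rw [X_mul_emb] at this
    simpa using this
  have hm2 : emb lam 0 0 ((p : ℤ) ^ l) ∈ I := by
    have := I.mul_mem_left (Ideal.Quotient.mk _ X) hm1
    rw [X_mul_emb] at this
    simpa using this
  exact ⟨hm0, hm1, hm2⟩

lemma exists_spec (hp : p.Prime) {I : Ideal (Rng lam)} {l : ℕ}
    (hcard : Nat.card (Rng lam ⧸ I) = p ^ l) :
    ∃ a0 a1 a2 α β γ, Spec lam p I a0 a1 a2 α β γ := by
  obtain ⟨hm0, hm1, hm2⟩ := pow_mem_of_card lam p hcard
  obtain ⟨a0, -, hS0⟩ := exists_span_pow p hp (S0 lam I) ⟨0, 0, hm0⟩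
  obtain ⟨a1, -, hS1⟩ := exists_span_pow p hp (S1 lam I) ⟨0, hm1⟩
  obtain ⟨a2, -, hS2⟩ := exists_span_pow p hp (S2 lam I) hm2
  have hppos : (0 : ℤ) < (p : ℤ) := by exact_mod_cast hp.pos
  have hP2pos : (0 : ℤ) < (p : ℤ) ^ a2 := pow_pos hppos _
  have hP1pos : (0 : ℤ) < (p : ℤ) ^ a1 := pow_pos hppos _
  have reduce_c : ∀ a b c : ℤ, emb lam a b c ∈ I → emb lam a b (c % (p : ℤ) ^ a2) ∈ I := by
    intro a b c h
    have h2 : emb lam 0 0 ((p : ℤ) ^ a2 * (c / (p : ℤ) ^ a2)) ∈ I := by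
      have : ((p : ℤ) ^ a2 * (c / (p : ℤ) ^ a2)) ∈ S2 lam I := by
        rw [hS2]; exact Ideal.mem_span_singleton.mpr ⟨_, rfl⟩
      exact this
    have hh := I.sub_mem h h2
    rw [emb_sub] at hh
    have e : c - (p : ℤ) ^ a2 * (c / (p : ℤ) ^ a2) = c % (p : ℤ) ^ a2 := by
      rw [Int.emod_def]
    simpa [e] using hh
  have hP1S : (p : ℤ) ^ a1 ∈ S1 lam I := by
    rw [hS1]; exact Ideal.mem_span_singleton_self _
  obtain ⟨c1, hc1⟩ := hP1S
  have hv1 : emb lam 0 ((p : ℤ) ^ a1) (c1 % (p : ℤ) ^ a2) ∈ I := reduce_c _ _ _ hc1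
  have hP0S : (p : ℤ) ^ a0 ∈ S0 lam I := by
    rw [hS0]; exact Ideal.mem_span_singleton_self _
  obtain ⟨b0, c0, h0⟩ := hP0S
  have hmid : emb lam ((p : ℤ) ^ a0) (b0 % (p : ℤ) ^ a1)
      (c0 - b0 / (p : ℤ) ^ a1 * (c1 % (p : ℤ) ^ a2)) ∈ I := by
    have hh := I.sub_mem h0
      (I.mul_mem_left (Ideal.Quotient.mk _ (C (b0 / (p : ℤ) ^ a1))) hv1)
    rw [C_mul_emb, emb_sub] at hh
    have e0 : (p : ℤ) ^ a0 - b0 / (p : ℤ) ^ a1 * 0 = (p : ℤ) ^ a0 := by ring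
    have e1 : b0 - b0 / (p : ℤ) ^ a1 * (p : ℤ) ^ a1 = b0 % (p : ℤ) ^ a1 := by
      rw [Int.emod_def]; ring
    rwa [e0, e1] at hh
  have hv0 := reduce_c _ _ _ hmid
  refine ⟨a0, a1, a2, _, _, _, ⟨hS0, hS1, hS2,
    Int.emod_nonneg _ (ne_of_gt hP1pos), Int.emod_lt_of_pos _ hP1pos,
    Int.emod_nonneg _ (ne_of_gt hP2pos), Int.emod_lt_of_pos _ hP2pos,
    Int.emod_nonneg _ (ne_of_gt hP2pos), Int.emod_lt_of_pos _ hP2pos, hv0, hv1⟩⟩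

namespace Spec

variable {lam p} {I : Ideal (Rng lam)} {a0 a1 a2 : ℕ} {α β γ : ℤ}

lemma a2_le {l : ℕ} (hp : p.Prime) (hcard : Nat.card (Rng lam ⧸ I) = p ^ l)
    (h : Spec lam p I a0 a1 a2 α β γ) : a2 ≤ l := by
  obtain ⟨-, -, hm2⟩ := pow_mem_of_card lam p hcard
  have h1 : ((p : ℤ) ^ l) ∈ S2 lam I := hm2
  rw [h.hS2, Ideal.mem_span_singleton] at h1
  have h2 : p ^ a2 ∣ p ^ l := by
    have := Int.natAbs_dvd_natAbs.mpr h1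
    simpa [Int.natAbs_pow] using this
  exact (Nat.pow_dvd_pow_iff_le_right hp.one_lt).mp h2

lemma a01_le {l : ℕ} (hp : p.Prime) (hcard : Nat.card (Rng lam ⧸ I) = p ^ l)
    (h : Spec lam p I a0 a1 a2 α β γ) : a0 + a1 ≤ l := by
  have hfin : Finite (Rng lam ⧸ I) :=
    Nat.finite_of_card_ne_zero (by rw [hcard]; exact pow_ne_zero l hp.pos.ne')
  set F : Fin (p ^ a0) × Fin (p ^ a1) → Rng lam ⧸ I :=
    fun x => Ideal.Quotient.mk I (emb lam ((x.1 : ℕ) : ℤ) ((x.2 : ℕ) : ℤ) 0) with hF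
  have hppos : (0 : ℤ) < (p : ℤ) := by exact_mod_cast hp.pos
  have hinj : Function.Injective F := by
    intro x y hxy
    rw [hF] at hxy
    simp only [] at hxy
    rw [Ideal.Quotient.mk_eq_mk_iff_sub_mem, emb_sub, sub_zero] at hxy
    have ha : (p : ℤ) ^ a0 ∣ ((x.1 : ℕ) : ℤ) - ((y.1 : ℕ) : ℤ) := by
      have : (((x.1 : ℕ) : ℤ) - ((y.1 : ℕ) : ℤ)) ∈ S0 lam I := ⟨_, _, hxy⟩
      rwa [h.hS0, Ideal.mem_span_singleton] at this
    have hx1b : ((x.1 : ℕ) : ℤ) < (p : ℤ) ^ a0 := by exact_mod_cast x.1.isLt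
    have hy1b : ((y.1 : ℕ) : ℤ) < (p : ℤ) ^ a0 := by exact_mod_cast y.1.isLt
    have hxe : ((x.1 : ℕ) : ℤ) - ((y.1 : ℕ) : ℤ) = 0 := by
      apply Int.eq_zero_of_abs_lt_dvd ha
      rw [abs_lt]
      constructor <;> [linarith [Int.natCast_nonneg (x.1 : ℕ)]; linarith [Int.natCast_nonneg (y.1 : ℕ)]]
    have hx1 : x.1 = y.1 := by
      apply Fin.ext
      have : ((x.1 : ℕ) : ℤ) = ((y.1 : ℕ) : ℤ) := by linarith
      exact_mod_cast this
    rw [hxe] at hxy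
    have hb : (p : ℤ) ^ a1 ∣ ((x.2 : ℕ) : ℤ) - ((y.2 : ℕ) : ℤ) := by
      have : (((x.2 : ℕ) : ℤ) - ((y.2 : ℕ) : ℤ)) ∈ S1 lam I := ⟨_, hxy⟩
      rwa [h.hS1, Ideal.mem_span_singleton] at this
    have hx2b : ((x.2 : ℕ) : ℤ) < (p : ℤ) ^ a1 := by exact_mod_cast x.2.isLt
    have hy2b : ((y.2 : ℕ) : ℤ) < (p : ℤ) ^ a1 := by exact_mod_cast y.2.isLt
    have hx2 : x.2 = y.2 := by
      apply Fin.ext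
      have hz : ((x.2 : ℕ) : ℤ) - ((y.2 : ℕ) : ℤ) = 0 := by
        apply Int.eq_zero_of_abs_lt_dvd hb
        rw [abs_lt]
        constructor <;> [linarith [Int.natCast_nonneg (x.2 : ℕ)]; linarith [Int.natCast_nonneg (y.2 : ℕ)]]
      have : ((x.2 : ℕ) : ℤ) = ((y.2 : ℕ) : ℤ) := by linarith
      exact_mod_cast this
    exact Prod.ext hx1 hx2
  have hcle := Nat.card_le_card_of_injective F hinj
  rw [hcard] at hcle
  have hcf : Nat.card (Fin (p ^ a0) × Fin (p ^ a1)) = p ^ a0 * p ^ a1 := by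
    simp [Nat.card_prod]
  rw [hcf, ← pow_add] at hcle
  exact (Nat.pow_le_pow_iff_right hp.one_lt).mp hcle

end Spec

end LocalFactorAux

namespace LocalFactorAux

open Polynomial

variable (lam : ℤ) (p : ℕ)

/-- `p`-adic valuation of `lam`. -/
def ee : ℕ := lam.natAbs.factorization p

def gg (a2 : ℕ) : ℕ := Nat.gcd lam.natAbs (p ^ a2)

def Mz (a2 : ℕ) : ℤ := ((p ^ a2 / gg lam p a2 : ℕ) : ℤ)

lemma gg_pos (hp : 0 < p) (a2 : ℕ) : 0 < gg lam p a2 :=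
  Nat.gcd_pos_of_pos_right _ (pow_pos hp _)

lemma gg_dvd (a2 : ℕ) : gg lam p a2 ∣ p ^ a2 := Nat.gcd_dvd_right _ _

lemma Mz_mul_gg (a2 : ℕ) : Mz lam p a2 * (gg lam p a2 : ℤ) = (p : ℤ) ^ a2 := by
  unfold Mz
  rw [← Nat.cast_mul, Nat.div_mul_cancel (gg_dvd lam p a2)]
  push_cast
  ring

lemma Mz_pos (hp : 0 < p) (a2 : ℕ) : 0 < Mz lam p a2 := by
  have := Nat.div_pos (Nat.le_of_dvd (pow_pos hp _) (gg_dvd lam p a2)) (gg_pos lam p hp a2)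
  unfold Mz
  exact_mod_cast this

lemma key_dvd (hp : 0 < p) (hlam : lam ≠ 0) (a2 : ℕ) {z : ℤ}
    (h : (p : ℤ) ^ a2 ∣ lam * z) : Mz lam p a2 ∣ z := by
  set g := gg lam p a2 with hg
  have hgpos : 0 < g := gg_pos lam p hp a2
  have hN : p ^ a2 ∣ lam.natAbs * z.natAbs := by
    have := Int.natAbs_dvd_natAbs.mpr h
    simpa [Int.natAbs_mul, Int.natAbs_pow] using this
  have hco : Nat.Coprime (lam.natAbs / g) (p ^ a2 / g) :=
    Nat.coprime_div_gcd_div_gcd hgpos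
  have e1 : g * (p ^ a2 / g) = p ^ a2 := Nat.mul_div_cancel' (gg_dvd lam p a2)
  have e2 : g * (lam.natAbs / g) = lam.natAbs := Nat.mul_div_cancel' (Nat.gcd_dvd_left _ _)
  have h2 : g * (p ^ a2 / g) ∣ g * ((lam.natAbs / g) * z.natAbs) := by
    rw [e1, ← mul_assoc, e2]; exact hN
  have h3 : (p ^ a2 / g) ∣ (lam.natAbs / g) * z.natAbs :=
    (Nat.mul_dvd_mul_iff_left hgpos).mp h2
  have h4 : (p ^ a2 / g) ∣ z.natAbs := (hco.symm).dvd_of_dvd_mul_left h3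
  exact Int.natCast_dvd.mpr h4

lemma gg_le (hp : p.Prime) (hlam : lam ≠ 0) (a2 : ℕ) : gg lam p a2 ≤ p ^ ee lam p := by
  obtain ⟨j, -, hj⟩ := (Nat.dvd_prime_pow hp).mp (gg_dvd lam p a2)
  have hdvd : p ^ j ∣ lam.natAbs := hj ▸ Nat.gcd_dvd_left _ _
  have hle : j ≤ ee lam p :=
    (Nat.Prime.pow_dvd_iff_le_factorization hp (Int.natAbs_ne_zero.mpr hlam)).mp hdvd
  rw [hj]
  exact Nat.pow_le_pow_right hp.pos hle

abbrev Tup : Type := (ℕ × ℕ × ℕ) × ℤ × ℤ × ℤ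

noncomputable def Emap : Tup → Tup := fun t =>
  ⟨t.1, t.2.1, t.2.2.1 / Mz lam p t.1.2.2, t.2.2.2 / Mz lam p t.1.2.2⟩

lemma ediv_inj {M z z' : ℤ} (hM : 0 < M) (hd : M ∣ z - z') (h : z / M = z' / M) : z = z' := by
  obtain ⟨k, hk⟩ := hd
  have hz : z = z' + M * k := by linarith
  rw [hz, Int.add_mul_ediv_left _ _ (ne_of_gt hM)] at h
  have hk0 : k = 0 := by omega
  rw [hz, hk0]
  ring

noncomputable def Fset (l : ℕ) : Finset Tup :=
  ((Finset.Iic l) ×ˢ (Finset.Iic l) ×ˢ (Finset.Iic l)) ×ˢ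
    ((Finset.Ico (0 : ℤ) ((p : ℤ) ^ (l / 2))) ×ˢ (Finset.Ico (0 : ℤ) ((p : ℤ) ^ ee lam p)) ×ˢ
      (Finset.Ico (0 : ℤ) ((p : ℤ) ^ ee lam p)))

lemma Fset_card (l : ℕ) :
    (Fset lam p l).card = (l + 1) ^ 3 * (p ^ (l / 2) * (p ^ ee lam p * p ^ ee lam p)) := by
  have htn : ∀ k : ℕ, ((p : ℤ) ^ k - 0).toNat = p ^ k := by
    intro k
    rw [sub_zero]
    norm_cast
  have htn : ∀ k : ℕ, ((p : ℤ) ^ k - 0).toNat = p ^ k := by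
    intro k
    rw [sub_zero, ← Nat.cast_pow, Int.toNat_natCast]
  simp only [Fset, Finset.card_product, Nat.card_Iic, Int.card_Ico, htn]
  ring

lemma Emap_mem {I : Ideal (Rng lam)} {l a0 a1 a2 : ℕ} {α β γ : ℤ}
    (hp : p.Prime) (hlam : lam ≠ 0) (hcard : Nat.card (Rng lam ⧸ I) = p ^ l)
    (h : Spec lam p I a0 a1 a2 α β γ) :
    Emap lam p ⟨⟨a0, a1, a2⟩, α, β, γ⟩ ∈ Fset lam p l := by
  have h01 := h.a01_le hp hcard
  have h2l := h.a2_le hp hcard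
  have hMpos := Mz_pos lam p hp.pos a2
  have hgle : ((gg lam p a2 : ℕ) : ℤ) ≤ (p : ℤ) ^ ee lam p := by
    exact_mod_cast gg_le lam p hp hlam a2
  have hdivlt : ∀ z : ℤ, 0 ≤ z → z < (p : ℤ) ^ a2 → z / Mz lam p a2 < (p : ℤ) ^ ee lam p := by
    intro z hz0 hz1
    have h1 : z / Mz lam p a2 < (gg lam p a2 : ℤ) := by
      rw [Int.ediv_lt_iff_lt_mul hMpos]
      calc z < (p : ℤ) ^ a2 := hz1
      _ = (gg lam p a2 : ℤ) * Mz lam p a2 := by rw [mul_comm, Mz_mul_gg]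
    exact lt_of_lt_of_le h1 hgle
  simp only [Emap, Fset, Finset.mem_product, Finset.mem_Iic, Finset.mem_Ico]
  refine ⟨⟨by omega, by omega, h2l⟩, ⟨h.hα0, ?_⟩, ⟨Int.ediv_nonneg h.hβ0 hMpos.le, ?_⟩,
    ⟨Int.ediv_nonneg h.hγ0 hMpos.le, ?_⟩⟩
  · have ha1 : a1 ≤ l / 2 := by
      have := h.a1_le_a0 hp.one_lt
      omega
    calc α < (p : ℤ) ^ a1 := h.hα1
    _ ≤ (p : ℤ) ^ (l / 2) := by
        exact pow_le_pow_right₀ (by exact_mod_cast hp.one_lt.le) ha1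
  · exact hdivlt β h.hβ0 h.hβ1
  · exact hdivlt γ h.hγ0 h.hγ1

lemma Emap_inj {I I' : Ideal (Rng lam)} {a0 a1 a2 a0' a1' a2' : ℕ} {α β γ α' β' γ' : ℤ}
    (hp : p.Prime) (hlam : lam ≠ 0)
    (h : Spec lam p I a0 a1 a2 α β γ) (h' : Spec lam p I' a0' a1' a2' α' β' γ')
    (he : Emap lam p ⟨⟨a0, a1, a2⟩, α, β, γ⟩ = Emap lam p ⟨⟨a0', a1', a2'⟩, α', β', γ'⟩) :
    a0 = a0' ∧ a1 = a1' ∧ a2 = a2' ∧ α = α' ∧ β = β' ∧ γ = γ' := by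
  simp only [Emap, Prod.mk.injEq] at he
  obtain ⟨⟨ha0, ha1, ha2⟩, hα, hβ, hγ⟩ := he
  subst ha0; subst ha1; subst ha2; subst hα
  have hMpos := Mz_pos lam p hp.pos a2
  have hγe : γ = γ' := by
    apply ediv_inj hMpos ?_ hγ
    apply key_dvd lam p hp.pos hlam
    have := dvd_sub h.cong_γ h'.cong_γ
    have e : ((p : ℤ) ^ a1 + lam * γ) - ((p : ℤ) ^ a1 + lam * γ') = lam * (γ - γ') := by ring
    rwa [e] at this
  subst hγe
  have hβe : β = β' := by
    apply ediv_inj hMpos ?_ hβ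
    apply key_dvd lam p hp.pos hlam
    have := dvd_sub (h.cong_αβ hp.one_lt) (h'.cong_αβ hp.one_lt)
    have e : (α + lam * β - (p : ℤ) ^ (a0 - a1) * γ) - (α + lam * β' - (p : ℤ) ^ (a0 - a1) * γ)
        = lam * (β - β') := by ring
    rwa [e] at this
  exact ⟨rfl, rfl, rfl, rfl, hβe, rfl⟩

end LocalFactorAux

namespace LocalFactorAux

open Polynomial

variable (lam : ℤ) (p : ℕ)

lemma Emap_mem' {I : Ideal (Rng lam)} {l : ℕ} {t : Tup}
    (hp : p.Prime) (hlam : lam ≠ 0) (hcard : Nat.card (Rng lam ⧸ I) = p ^ l)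
    (h : Spec lam p I t.1.1 t.1.2.1 t.1.2.2 t.2.1 t.2.2.1 t.2.2.2) :
    Emap lam p t ∈ Fset lam p l := by
  obtain ⟨⟨a0, a1, a2⟩, α, β, γ⟩ := t
  exact Emap_mem lam p hp hlam hcard h

lemma Emap_inj' {I I' : Ideal (Rng lam)} {t t' : Tup}
    (hp : p.Prime) (hlam : lam ≠ 0)
    (h : Spec lam p I t.1.1 t.1.2.1 t.1.2.2 t.2.1 t.2.2.1 t.2.2.2)
    (h' : Spec lam p I' t'.1.1 t'.1.2.1 t'.1.2.2 t'.2.1 t'.2.2.1 t'.2.2.2)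
    (he : Emap lam p t = Emap lam p t') : t = t' := by
  obtain ⟨⟨a0, a1, a2⟩, α, β, γ⟩ := t
  obtain ⟨⟨a0', a1', a2'⟩, α', β', γ'⟩ := t'
  obtain ⟨e0, e1, e2, e3, e4, e5⟩ := Emap_inj lam p hp hlam h h' he
  subst e0; subst e1; subst e2; subst e3; subst e4; subst e5
  rfl

lemma idealCount_le (hp : p.Prime) (hlam : lam ≠ 0) (l : ℕ) :
    idealCount (Rng lam) (p ^ l)
      ≤ (l + 1) ^ 3 * (p ^ (l / 2) * (p ^ ee lam p * p ^ ee lam p)) := by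
  classical
  rw [idealCount]
  have hmain : {I : Ideal (Rng lam) | Nat.card (Rng lam ⧸ I) = p ^ l}.ncard
      ≤ ((Fset lam p l : Finset Tup) : Set Tup).ncard := by
    apply Set.ncard_le_ncard_of_injOn
      (fun I : Ideal (Rng lam) =>
        if h : ∃ t : Tup, Spec lam p I t.1.1 t.1.2.1 t.1.2.2 t.2.1 t.2.2.1 t.2.2.2
        then Emap lam p h.choose else default)
    · intro I hI
      simp only [Set.mem_setOf_eq] at hI
      obtain ⟨a0, a1, a2, α, β, γ, hs⟩ := exists_spec lam p hp hI
      have hex : ∃ t : Tup, Spec lam p I t.1.1 t.1.2.1 t.1.2.2 t.2.1 t.2.2.1 t.2.2.2 :=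
        ⟨⟨⟨a0, a1, a2⟩, α, β, γ⟩, hs⟩
      simp only [dif_pos hex]
      exact Finset.mem_coe.mpr (Emap_mem' lam p hp hlam hI hex.choose_spec)
    · intro I hI I' hI' heq
      simp only [Set.mem_setOf_eq] at hI hI'
      obtain ⟨a0, a1, a2, α, β, γ, hs⟩ := exists_spec lam p hp hI
      obtain ⟨a0', a1', a2', α', β', γ', hs'⟩ := exists_spec lam p hp hI'
      have hex : ∃ t : Tup, Spec lam p I t.1.1 t.1.2.1 t.1.2.2 t.2.1 t.2.2.1 t.2.2.2 :=
        ⟨⟨⟨a0, a1, a2⟩, α, β, γ⟩, hs⟩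
      have hex' : ∃ t : Tup, Spec lam p I' t.1.1 t.1.2.1 t.1.2.2 t.2.1 t.2.2.1 t.2.2.2 :=
        ⟨⟨⟨a0', a1', a2'⟩, α', β', γ'⟩, hs'⟩
      simp only [dif_pos hex, dif_pos hex'] at heq
      have ht := Emap_inj' lam p hp hlam hex.choose_spec hex'.choose_spec heq
      have hsp' := hex'.choose_spec
      rw [← ht] at hsp'
      exact spec_unique lam p hex.choose_spec hsp'
  rw [Set.ncard_coe_finset, Fset_card] at hmain
  exact hmain

end LocalFactorAux

/-- For `f = X²(X - λ)` and a prime `p ∣ λ`, the local factor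
`∑_{l ≥ 0} a_R(p^l) p^{-lσ}` converges for every real `σ > 1/2`. -/
theorem local_factor_lambda_dividing_summable (lam : ℤ) (hlam : lam ≠ 0)
    (p : ℕ) (hp : p.Prime) (hpl : (p : ℤ) ∣ lam) (σ : ℝ) (hσ : 1 / 2 < σ) :
    Summable (fun l : ℕ =>
      (idealCount
        (Polynomial ℤ ⧸ Ideal.span
          {(Polynomial.X : Polynomial ℤ) ^ 2 * (Polynomial.X - Polynomial.C lam)})
        (p ^ l) : ℝ) * (p : ℝ) ^ (-(l : ℝ) * σ)) := by
  set e := LocalFactorAux.ee lam p with he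
  have hp1 : (1 : ℝ) < (p : ℝ) := by exact_mod_cast hp.one_lt
  have hp0 : (0 : ℝ) < (p : ℝ) := lt_trans zero_lt_one hp1
  set r : ℝ := (p : ℝ) ^ ((1 : ℝ) / 2 - σ) with hr
  have hr0 : 0 ≤ r := Real.rpow_nonneg hp0.le _
  have hr1 : r < 1 := Real.rpow_lt_one_of_one_lt_of_neg hp1 (by linarith)
  have hrnorm : ‖r‖ < 1 := by rwa [Real.norm_eq_abs, abs_of_nonneg hr0]
  have h3 := summable_pow_mul_geometric_of_norm_lt_one 3 hrnorm
  have h2 := summable_pow_mul_geometric_of_norm_lt_one 2 hrnorm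
  have h1s := summable_pow_mul_geometric_of_norm_lt_one 1 hrnorm
  have h0 := summable_pow_mul_geometric_of_norm_lt_one 0 hrnorm
  have hbase : Summable (fun l : ℕ => ((l : ℝ) + 1) ^ 3 * r ^ l) := by
    have hsum := (h3.add (h2.mul_left 3)).add ((h1s.mul_left 3).add h0)
    apply hsum.congr
    intro n
    ring
  have hmaj : Summable (fun l : ℕ =>
      (((l : ℝ) + 1) ^ 3 * ((p : ℝ) ^ e * (p : ℝ) ^ e)) * r ^ l) := by
    apply (hbase.mul_right ((p : ℝ) ^ e * (p : ℝ) ^ e)).congr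
    intro n
    ring
  apply Summable.of_nonneg_of_le ?_ ?_ hmaj
  · intro l
    positivity
  · intro l
    have hcount := LocalFactorAux.idealCount_le lam p hp hlam l
    have hc : (idealCount (LocalFactorAux.Rng lam) (p ^ l) : ℝ)
        ≤ ((l : ℝ) + 1) ^ 3 * ((p : ℝ) ^ (l / 2 : ℕ) * ((p : ℝ) ^ e * (p : ℝ) ^ e)) := by
      exact_mod_cast hcount
    have hrpow0 : (0 : ℝ) ≤ (p : ℝ) ^ (-(l : ℝ) * σ) := Real.rpow_nonneg hp0.le _
    have hkey : (p : ℝ) ^ (l / 2 : ℕ) * (p : ℝ) ^ (-(l : ℝ) * σ) ≤ r ^ l := by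
      have e1 : ((p : ℝ) ^ (l / 2 : ℕ) : ℝ) = (p : ℝ) ^ (((l / 2 : ℕ) : ℝ)) :=
        (Real.rpow_natCast _ _).symm
      have e2 : (p : ℝ) ^ (((l / 2 : ℕ) : ℝ)) ≤ (p : ℝ) ^ ((l : ℝ) / 2) := by
        apply Real.rpow_le_rpow_of_exponent_le hp1.le
        exact_mod_cast (Nat.cast_div_le : ((l / 2 : ℕ) : ℝ) ≤ (l : ℝ) / 2)
      calc (p : ℝ) ^ (l / 2 : ℕ) * (p : ℝ) ^ (-(l : ℝ) * σ)
          ≤ (p : ℝ) ^ ((l : ℝ) / 2) * (p : ℝ) ^ (-(l : ℝ) * σ) := by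
            apply mul_le_mul_of_nonneg_right _ hrpow0
            rw [e1]; exact e2
        _ = (p : ℝ) ^ ((l : ℝ) / 2 + (-(l : ℝ) * σ)) := (Real.rpow_add hp0 _ _).symm
        _ = (p : ℝ) ^ (((1 : ℝ) / 2 - σ) * (l : ℝ)) := by congr 1; ring
        _ = r ^ l := by rw [Real.rpow_mul hp0.le, Real.rpow_natCast]
    calc (idealCount (LocalFactorAux.Rng lam) (p ^ l) : ℝ) * (p : ℝ) ^ (-(l : ℝ) * σ)
        ≤ (((l : ℝ) + 1) ^ 3 * ((p : ℝ) ^ (l / 2 : ℕ) * ((p : ℝ) ^ e * (p : ℝ) ^ e)))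
            * (p : ℝ) ^ (-(l : ℝ) * σ) := mul_le_mul_of_nonneg_right hc hrpow0
      _ = (((l : ℝ) + 1) ^ 3 * ((p : ℝ) ^ e * (p : ℝ) ^ e))
            * ((p : ℝ) ^ (l / 2 : ℕ) * (p : ℝ) ^ (-(l : ℝ) * σ)) := by ring
      _ ≤ (((l : ℝ) + 1) ^ 3 * ((p : ℝ) ^ e * (p : ℝ) ^ e)) * r ^ l := by
            apply mul_le_mul_of_nonneg_left hkey (by positivity)
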